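/- Let δ ≥ 3, G = K_{δ+1}, and let H be a graph on n vertices where n is not a multiple of δ. Then χ_G(H) + χ_G(complement of H) ≤ ⌈n/δ⌉ + 1. -/
import Mathlib


open SimpleGraph

/-- `H` contains a copy of `G`: an injective map preserving adjacency. -/
def ContainsCopy {α β : Type*} (G : SimpleGraph α) (H : SimpleGraph β) : Prop :=
  ∃ f : α ↪ β, ∀ a b, G.Adj a b → H.Adj (f a) (f b)

/-- `H` is `G`-free. -/
def GFree {α β : Type*} (G : SimpleGraph α) (H : SimpleGraph β) : Prop :=
  ¬ ContainsCopy G H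

/-- The `G`-free chromatic number of `H`. -/
noncomputable def gChrom {α β : Type*} (G : SimpleGraph α) (H : SimpleGraph β) : ℕ :=
  sInf {k | ∃ c : β → Fin k, ∀ i, GFree G (H.induce {v | c v = i})}

/-- `H` is `G`-free `k`-critical. -/
def GFreeCritical {α β : Type*} (G : SimpleGraph α) (H : SimpleGraph β) (k : ℕ) : Prop :=
  gChrom G H = k ∧ ∀ F : H.Subgraph, F ≠ ⊤ → gChrom G F.coe ≤ k - 1

section Aux

variable {β : Type*}

/-- Extend a proper coloring of `H - v` to `H` using one fresh color. -/
private lemma extend_fresh [DecidableEq β] (H : SimpleGraph β) (v : β) {a : ℕ}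
    (c' : {w : β // w ≠ v} → Fin a)
    (hc : ∀ u w : {w : β // w ≠ v}, H.Adj u w → c' u ≠ c' w) :
    ∃ c : β → Fin (a + 1), ∀ u w, H.Adj u w → c u ≠ c w := by
  refine ⟨fun w => if h : w = v then Fin.last a else (c' ⟨w, h⟩).castSucc, ?_⟩
  intro u w huw
  by_cases hu : u = v
  · by_cases hw : w = v
    · exact absurd (hu ▸ hw ▸ huw) H.irrefl
    · simp only [dif_pos hu, dif_neg hw]
      exact (Fin.castSucc_lt_last _).ne'
  · by_cases hw : w = v
    · simp only [dif_pos hw, dif_neg hu]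
      exact (Fin.castSucc_lt_last _).ne
    · simp only [dif_neg hu, dif_neg hw]
      exact fun h => hc ⟨u, hu⟩ ⟨w, hw⟩ huw (Fin.castSucc_injective _ h)

/-- If `deg v < a`, extend a proper `a`-coloring of `H - v` to `H` reusing a color. -/
private lemma extend_reuse [Fintype β] [DecidableEq β] (H : SimpleGraph β)
    [DecidableRel H.Adj] (v : β) {a : ℕ}
    (c' : {w : β // w ≠ v} → Fin a)
    (hc : ∀ u w : {w : β // w ≠ v}, H.Adj u w → c' u ≠ c' w)
    (hdeg : H.degree v < a) :
    ∃ c : β → Fin a, ∀ u w, H.Adj u w → c u ≠ c w := by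
  classical
  set s : Finset (Fin a) :=
    (H.neighborFinset v).attach.image
      (fun w => c' ⟨w.1, fun h => H.irrefl (h ▸ (H.mem_neighborFinset v w.1).mp w.2)⟩) with hs
  have hcard : s.card < a := by
    calc s.card ≤ (H.neighborFinset v).attach.card := Finset.card_image_le
    _ = H.degree v := by rw [Finset.card_attach]; rfl
    _ < a := hdeg
  have : ∃ i : Fin a, i ∉ s := by
    by_contra h
    push_neg at h
    have : (Finset.univ : Finset (Fin a)) ⊆ s := fun i _ => h i
    have := Finset.card_le_card this
    simp only [Finset.card_univ, Fintype.card_fin] at this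
    omega
  obtain ⟨i, hi⟩ := this
  have hnbr : ∀ (w : β) (hw : w ≠ v), H.Adj v w → c' ⟨w, hw⟩ ≠ i := by
    intro w hw hadj h
    apply hi
    rw [hs]
    apply Finset.mem_image.mpr
    refine ⟨⟨w, (H.mem_neighborFinset v w).mpr hadj⟩, Finset.mem_attach _ _, ?_⟩
    rw [← h]
  refine ⟨fun w => if h : w = v then i else c' ⟨w, h⟩, ?_⟩
  intro u w huw
  by_cases hu : u = v <;> by_cases hw : w = v
  · exact absurd (hu ▸ hw ▸ huw) (H.irrefl)
  · simp only [dif_pos hu, dif_neg hw]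
    exact fun h => hnbr w hw (hu ▸ huw) h.symm
  · simp only [dif_pos hw, dif_neg hu]
    exact fun h => hnbr u hu (hw ▸ huw.symm) h
  · simp only [dif_neg hu, dif_neg hw]
    intro h
    exact hc ⟨u, hu⟩ ⟨w, hw⟩ huw h

/-- Nordhaus–Gaddum: proper colorings of `H` and `Hᶜ` with at most `n + 1` colors in total. -/
private lemma ng_aux : ∀ (n : ℕ) {β : Type*} [Fintype β] (H : SimpleGraph β),
    Fintype.card β = n →
    ∃ (a b : ℕ) (c : β → Fin a) (d : β → Fin b),
      (∀ u w, H.Adj u w → c u ≠ c w) ∧ (∀ u w, Hᶜ.Adj u w → d u ≠ d w) ∧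
      a + b ≤ n + 1 := by
  intro n
  induction n with
  | zero =>
    intro β _ H hcard
    have : IsEmpty β := Fintype.card_eq_zero_iff.mp hcard
    exact ⟨0, 0, fun v => isEmptyElim v, fun v => isEmptyElim v,
      fun u => isEmptyElim u, fun u => isEmptyElim u, by omega⟩
  | succ n ih =>
    intro β _ H hcard
    classical
    obtain ⟨v⟩ : Nonempty β := Fintype.card_pos_iff.mp (by omega)
    have hγ : Fintype.card {w : β // w ≠ v} = n := by
      have h2 : Fintype.card {w : β // ¬ w = v} = Fintype.card β - Fintype.card {w : β // w = v} :=
        Fintype.card_subtype_compl _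
    
      have h3 : Fintype.card {w : β // w = v} = 1 := Fintype.card_subtype_eq v
      have h4 : Fintype.card {w : β // w ≠ v} = Fintype.card {w : β // ¬ w = v} := rfl
      omega
    obtain ⟨a, b, c', d', hc', hd', hab⟩ := ih (H.comap (Subtype.val : {w : β // w ≠ v} → β)) hγ
    have hc : ∀ u w : {w : β // w ≠ v}, H.Adj u w → c' u ≠ c' w := fun u w h => hc' u w h
    have hd : ∀ u w : {w : β // w ≠ v}, Hᶜ.Adj u w → d' u ≠ d' w := by
      intro u w h
      apply hd' u w
      refine ⟨fun he => h.1 (by rw [he]), h.2⟩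
    by_cases h1 : H.degree v < a
    · obtain ⟨c, hcp⟩ := extend_reuse H v c' hc h1
      obtain ⟨d, hdp⟩ := extend_fresh Hᶜ v d' hd
      exact ⟨a, b + 1, c, d, hcp, hdp, by omega⟩
    · by_cases h2 : Hᶜ.degree v < b
      · obtain ⟨d, hdp⟩ := extend_reuse Hᶜ v d' hd h2
        have hc2 : ∀ u w : {w : β // w ≠ v}, Hᶜᶜ.Adj u w → c' u ≠ c' w := by
          simpa using hc
        obtain ⟨c, hcp⟩ := extend_fresh Hᶜᶜ v c' hc2
        rw [compl_compl] at hcp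
        exact ⟨a + 1, b, c, d, hcp, hdp, by omega⟩
      · have hdc : Hᶜ.degree v = Fintype.card β - 1 - H.degree v := H.degree_compl v
        have hdlt : H.degree v < Fintype.card β := H.degree_lt_card_verts v
        have hab2 : a + b ≤ n := by omega
        obtain ⟨c, hcp⟩ := extend_fresh H v c' hc
        obtain ⟨d, hdp⟩ := extend_fresh Hᶜ v d' hd
        exact ⟨a + 1, b + 1, c, d, hcp, hdp, by omega⟩

/-- Grouping color classes `δ` at a time bounds the `K_{δ+1}`-free chromatic number. -/
private lemma group_bound [Fintype β] (δ : ℕ) (hδ : 0 < δ)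
    (H : SimpleGraph β) (a : ℕ) (c : β → Fin a)
    (hc : ∀ u w, H.Adj u w → c u ≠ c w) :
    gChrom (completeGraph (Fin (δ + 1))) H ≤ (a + δ - 1) / δ := by
  classical
  set m := (a + δ - 1) / δ with hm
  have hlt : ∀ w : β, (c w).1 / δ < m := by
    intro w
    have hw := (c w).2
    have ha1 : 1 ≤ a := by omega
    have hmeq : m = (a - 1) / δ + 1 := by
      rw [hm, show a + δ - 1 = (a - 1) + δ by omega, Nat.add_div_right _ hδ]
    have : (c w).1 / δ ≤ (a - 1) / δ := Nat.div_le_div_right (by omega)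
    omega
  apply Nat.sInf_le
  refine ⟨fun w => ⟨(c w).1 / δ, hlt w⟩, ?_⟩
  intro i ⟨f, hf⟩
  have hdiv : ∀ j : Fin (δ + 1), (c (f j).1).1 / δ = i.1 := by
    intro j
    exact congrArg Fin.val (f j).2
  set g : Fin (δ + 1) → Fin δ := fun j => ⟨(c (f j).1).1 % δ, Nat.mod_lt _ hδ⟩ with hg
  have ginj : Function.Injective g := by
    intro j k h
    by_contra hne
    have hadj : (completeGraph (Fin (δ + 1))).Adj j k := hne
    have hHadj : H.Adj (f j).1 (f k).1 := hf j k hadj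
    have hcne : c (f j).1 ≠ c (f k).1 := hc _ _ hHadj
    apply hcne
    apply Fin.val_injective
    have hmod : (c (f j).1).1 % δ = (c (f k).1).1 % δ := congrArg Fin.val h
    calc (c (f j).1).1 = δ * ((c (f j).1).1 / δ) + (c (f j).1).1 % δ :=
          (Nat.div_add_mod _ δ).symm
      _ = δ * ((c (f k).1).1 / δ) + (c (f k).1).1 % δ := by
          rw [hdiv j, hdiv k, hmod]
      _ = (c (f k).1).1 := Nat.div_add_mod _ δ
  have := Fintype.card_le_of_injective g ginj
  simp only [Fintype.card_fin] at this
  omega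

/-- Cast of the rational ceiling to natural division. -/
private lemma ceil_cast (n δ : ℕ) (hδ : 0 < δ) :
    ⌈((n : ℚ) / (δ : ℚ))⌉₊ = (n + δ - 1) / δ := by
  have hδq : (0 : ℚ) < (δ : ℚ) := by exact_mod_cast hδ
  rcases Nat.eq_zero_or_pos n with hn | hn
  · subst hn
    simp [Nat.div_eq_of_lt (by omega : δ - 1 < δ)]
  · set m := (n + δ - 1) / δ with hm
    have hmeq : m = (n - 1) / δ + 1 := by
      rw [hm, show n + δ - 1 = (n - 1) + δ by omega, Nat.add_div_right _ hδ]
    have hm0 : m ≠ 0 := by rw [hmeq]; exact Nat.succ_ne_zero _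
    rw [Nat.ceil_eq_iff hm0]
    constructor
    · rw [lt_div_iff₀ hδq]
      have h1 : (m - 1) * δ ≤ n - 1 := by
        rw [hmeq]
        simpa using Nat.div_mul_le_self (n - 1) δ
      have h2 : (m - 1) * δ < n := lt_of_le_of_lt h1 (by omega)
      exact_mod_cast h2
    · rw [div_le_iff₀ hδq]
      have h1 : (n - 1) / δ < m := by omega
      have h2 : n - 1 < m * δ := (Nat.div_lt_iff_lt_mul hδ).mp h1
      have h3 : n ≤ m * δ := Nat.le_of_pred_lt h2
      exact_mod_cast h3

end Aux

theorem stmt8 {β : Type*} [Fintype β] (δ : ℕ) (hδ : 3 ≤ δ)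
    (H : SimpleGraph β) (n : ℕ) (hn : Fintype.card β = n) (hnd : ¬ δ ∣ n) :
    gChrom (completeGraph (Fin (δ + 1))) H + gChrom (completeGraph (Fin (δ + 1))) Hᶜ ≤
      ⌈((n : ℚ) / (δ : ℚ))⌉₊ + 1 := by
  classical
  have hδ0 : 0 < δ := by omega
  have hn1 : 1 ≤ n := by
    rcases Nat.eq_zero_or_pos n with h | h
    · exact absurd (h ▸ dvd_zero δ) (h ▸ hnd)
    · exact h
  obtain ⟨a, b, c, d, hc, hd, hab⟩ := ng_aux n H hn
  have hβ : Nonempty β := Fintype.card_pos_iff.mp (by omega)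
  have ha1 : 1 ≤ a := by
    obtain ⟨v⟩ := hβ
    have := (c v).2
    omega
  have hb1 : 1 ≤ b := by
    obtain ⟨v⟩ := hβ
    have := (d v).2
    omega
  have h1 := group_bound δ hδ0 H a c hc
  have h2 := group_bound δ hδ0 Hᶜ b d hd
  rw [ceil_cast n δ hδ0]
  have key : ∀ x : ℕ, 1 ≤ x → (x + δ - 1) / δ = (x - 1) / δ + 1 := by
    intro x hx
    rw [show x + δ - 1 = (x - 1) + δ by omega, Nat.add_div_right _ hδ0]
  rw [key a ha1] at h1
  rw [key b hb1] at h2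
  rw [key n hn1]
  have hsum : (a - 1) / δ + (b - 1) / δ ≤ (n - 1) / δ := by
    have step1 : (a - 1) / δ + (b - 1) / δ ≤ ((a - 1) + (b - 1)) / δ := by
      rw [Nat.le_div_iff_mul_le hδ0, add_mul]
      exact Nat.add_le_add (Nat.div_mul_le_self _ _) (Nat.div_mul_le_self _ _)
    have step2 : ((a - 1) + (b - 1)) / δ ≤ (n - 1) / δ :=
      Nat.div_le_div_right (by omega)
    omega
  omega
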